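/- Let A, C ∈ ℝ^{n×n}, B, D ∈ ℝ^{n×m}, let Q ∈ ℝ^{n×n} and R ∈ ℝ^{m×m} be symmetric positive definite, and let γ ∈ [0,1). Let (L_i)_{i≥0} in ℝ^{m×n} and (P_i)_{i≥0} symmetric positive definite in ℝ^{n×n} satisfy, for every i: P_i = γ(A+BL_i)ᵀP_i(A+BL_i) + γ(C+DL_i)ᵀP_i(C+DL_i) + L_iᵀRL_i + Q, and L_{i+1} = −(R + γBᵀP_iB + γDᵀP_iD)⁻¹(γBᵀP_iA + γDᵀP_iC). Then for every i, P_{i+1} ≤ P_i, i.e. P_i − P_{i+1} is positive semidefinite. -/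

import Mathlib

open Matrix

private lemma quad_ub' {n : ℕ} (M : Matrix (Fin n) (Fin n) ℝ) (x : Fin n → ℝ) :
    x ⬝ᵥ M *ᵥ x ≤ (∑ i, ∑ j, |M i j|) * (x ⬝ᵥ x) := by
  have hxx : ∀ k, x k ^ 2 ≤ x ⬝ᵥ x := by
    intro k
    have h : x ⬝ᵥ x = ∑ j, x j ^ 2 := by simp [dotProduct, sq]
    rw [h]
    exact Finset.single_le_sum (f := fun j => x j ^ 2) (fun j _ => sq_nonneg _)
      (Finset.mem_univ k)
  calc x ⬝ᵥ M *ᵥ x = ∑ i, ∑ j, x i * (M i j * x j) := by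
        simp [dotProduct, mulVec, Finset.mul_sum]
    _ ≤ ∑ i, ∑ j, |M i j| * (x ⬝ᵥ x) := by
        refine Finset.sum_le_sum fun i _ => Finset.sum_le_sum fun j _ => ?_
        have h1 := hxx i; have h2 := hxx j
        have e1 : x i * x j ≤ x ⬝ᵥ x := by nlinarith [sq_nonneg (x i - x j)]
        have e2 : -(x ⬝ᵥ x) ≤ x i * x j := by nlinarith [sq_nonneg (x i + x j)]
        have h4 : M i j ≤ |M i j| := le_abs_self _
        have h5 : -|M i j| ≤ M i j := neg_abs_le _
        nlinarith [mul_nonneg (sub_nonneg.2 h4) (sub_nonneg.2 e2),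
          mul_nonneg (sub_nonneg.2 (neg_le.1 h5)) (sub_nonneg.2 e1)]
    _ = (∑ i, ∑ j, |M i j|) * (x ⬝ᵥ x) := by
        simp [Finset.sum_mul]

private lemma quad_lb' {n : ℕ} {P : Matrix (Fin n) (Fin n) ℝ} (hP : P.PosDef) :
    ∃ c > 0, ∀ x : Fin n → ℝ, c * (x ⬝ᵥ x) ≤ x ⬝ᵥ P *ᵥ x := by
  by_cases hn : n = 0
  · subst hn
    refine ⟨1, one_pos, fun x => ?_⟩
    simp [dotProduct]
  · have hnpos : 0 < n := Nat.pos_of_ne_zero hn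
    set E := EuclideanSpace ℝ (Fin n)
    let eqv := WithLp.equiv 2 (Fin n → ℝ)
    let f : E → ℝ := fun x => (eqv x) ⬝ᵥ P *ᵥ (eqv x)
    have hfc : Continuous f := by
      have h1 : Continuous fun y : Fin n → ℝ => y ⬝ᵥ P *ᵥ y := by
        unfold dotProduct mulVec
        refine continuous_finset_sum _ fun i _ => ((continuous_apply i).mul
          (continuous_finset_sum _ fun j _ => continuous_const.mul (continuous_apply j)))
      exact h1.comp (PiLp.continuous_ofLp 2 _)
    have hnorm_sq : ∀ X : E, ‖X‖ ^ 2 = (eqv X) ⬝ᵥ (eqv X) := by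
      intro X
      rw [EuclideanSpace.norm_eq]
      rw [Real.sq_sqrt (Finset.sum_nonneg fun i _ => sq_nonneg _)]
      simp [dotProduct, eqv, sq]
    have hS : IsCompact (Metric.sphere (0:E) 1) := isCompact_sphere 0 1
    have hne : (Metric.sphere (0:E) 1).Nonempty := by
      refine ⟨EuclideanSpace.single ⟨0, hnpos⟩ (1:ℝ), ?_⟩
      rw [mem_sphere_zero_iff_norm]
      exact (EuclideanSpace.norm_single _ _).trans norm_one
    obtain ⟨z, hzS, hzmin⟩ := hS.exists_isMinOn hne hfc.continuousOn
    have hznorm : ‖z‖ = 1 := by simpa using hzS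
    have hz0 : eqv z ≠ 0 := by
      intro h
      have : z = 0 := by
        apply (eqv.injective)
        exact h.trans (WithLp.ofLp_zero 2).symm
      rw [this] at hznorm; simp at hznorm
    have hc : 0 < f z := by
      have := hP.dotProduct_mulVec_pos hz0
      simpa [f] using this
    refine ⟨f z, hc, fun x => ?_⟩
    by_cases hx : x = 0
    · simp [hx]
    · set X : E := eqv.symm x with hX
      have hXnz : X ≠ 0 := by
        intro h; apply hx
        have := congrArg eqv h
        simpa [hX] using this.trans (WithLp.ofLp_zero 2)
      have ht : (0:ℝ) < ‖X‖ := norm_pos_iff.2 hXnz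
      have hmem : (‖X‖⁻¹ • X) ∈ Metric.sphere (0:E) 1 := by
        simp [norm_smul, abs_of_pos (inv_pos.2 ht), inv_mul_cancel₀ ht.ne']
      have hle := hzmin hmem
      have hfs : f (‖X‖⁻¹ • X) = ‖X‖⁻¹ * (‖X‖⁻¹ * (x ⬝ᵥ P *ᵥ x)) := by
        have heqs : eqv (‖X‖⁻¹ • X) = ‖X‖⁻¹ • (eqv X) := by
          exact WithLp.ofLp_smul 2 ‖X‖⁻¹ X
        have hx' : eqv X = x := by simp [hX]
        simp only [f, heqs, hx', smul_dotProduct, dotProduct_smul, mulVec_smul, smul_eq_mul]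
      have hxx : x ⬝ᵥ x = ‖X‖ ^ 2 := by rw [hnorm_sq X]; simp [hX]
      have hle2 : f z ≤ ‖X‖⁻¹ * (‖X‖⁻¹ * (x ⬝ᵥ P *ᵥ x)) := by
        rw [← hfs]; exact hle
      rw [hxx]
      have h2 : (0:ℝ) < ‖X‖ ^ 2 := by positivity
      calc f z * ‖X‖ ^ 2 ≤ (‖X‖⁻¹ * (‖X‖⁻¹ * (x ⬝ᵥ P *ᵥ x))) * ‖X‖ ^ 2 :=
            mul_le_mul_of_nonneg_right hle2 h2.le
        _ = x ⬝ᵥ P *ᵥ x := by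
            rw [pow_two]
            field_simp

private lemma psd_tconj {k l : ℕ} (X : Matrix (Fin k) (Fin l) ℝ)
    {P : Matrix (Fin k) (Fin k) ℝ} (hP : P.PosSemidef) : (Xᵀ * P * X).PosSemidef := by
  rw [← conjTranspose_eq_transpose_of_trivial]
  exact hP.conjTranspose_mul_mul_same X

private lemma herm_smul {k : ℕ} {M : Matrix (Fin k) (Fin k) ℝ} (c : ℝ)
    (h : M.IsHermitian) : (c • M).IsHermitian := by
  unfold Matrix.IsHermitian at *
  rw [conjTranspose_smul, h, star_trivial]

private lemma psd_smul {k : ℕ} {c : ℝ} (hc : 0 ≤ c) {M : Matrix (Fin k) (Fin k) ℝ}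
    (h : M.PosSemidef) : (c • M).PosSemidef := by
  refine posSemidef_iff_dotProduct_mulVec.mpr ⟨herm_smul c h.1, fun x => ?_⟩
  have := h.dotProduct_mulVec_nonneg x
  simp only [smul_mulVec, dotProduct_smul, smul_eq_mul]
  exact mul_nonneg hc this

private lemma expand_sle {n m : ℕ} (A C P : Matrix (Fin n) (Fin n) ℝ)
    (B D : Matrix (Fin n) (Fin m) ℝ)
    (R : Matrix (Fin m) (Fin m) ℝ) (γ : ℝ) (hPt : Pᵀ = P)
    (L : Matrix (Fin m) (Fin n) ℝ) :
    γ • ((A + B * L)ᵀ * P * (A + B * L)) + γ • ((C + D * L)ᵀ * P * (C + D * L))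
        + Lᵀ * R * L
      = (γ • (Aᵀ * P * A) + γ • (Cᵀ * P * C)) +
        (Lᵀ * (γ • (Bᵀ * P * A) + γ • (Dᵀ * P * C))
         + (γ • (Bᵀ * P * A) + γ • (Dᵀ * P * C))ᵀ * L
         + Lᵀ * (R + γ • (Bᵀ * P * B) + γ • (Dᵀ * P * D)) * L) := by
  simp only [transpose_add, transpose_mul, transpose_smul, transpose_transpose,
    Matrix.add_mul, Matrix.mul_add, Matrix.mul_smul, Matrix.smul_mul, smul_add,
    Matrix.mul_assoc, hPt]
  abel

theorem stmt11 {n m : ℕ} (A C : Matrix (Fin n) (Fin n) ℝ)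
    (B D : Matrix (Fin n) (Fin m) ℝ)
    (Q : Matrix (Fin n) (Fin n) ℝ) (R : Matrix (Fin m) (Fin m) ℝ) (γ : ℝ)
    (hQ : Q.PosDef) (hR : R.PosDef) (hγ0 : 0 ≤ γ) (hγ1 : γ < 1)
    (L : ℕ → Matrix (Fin m) (Fin n) ℝ) (P : ℕ → Matrix (Fin n) (Fin n) ℝ)
    (hPpd : ∀ i, (P i).PosDef)
    (hsle : ∀ i, P i = γ • ((A + B * L i)ᵀ * P i * (A + B * L i)) +
      γ • ((C + D * L i)ᵀ * P i * (C + D * L i)) + (L i)ᵀ * R * (L i) + Q)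
    (hupd : ∀ i, L (i + 1) = -((R + γ • (Bᵀ * P i * B) + γ • (Dᵀ * P i * D))⁻¹ *
      (γ • (Bᵀ * P i * A) + γ • (Dᵀ * P i * C)))) :
    ∀ i, (P i - P (i + 1)).PosSemidef := by
  intro i
  have hdot : ∀ x : Fin n → ℝ, 0 ≤ x ⬝ᵥ x :=
    fun x => Finset.sum_nonneg fun j _ => mul_self_nonneg _
  have hPt : ∀ j, (P j)ᵀ = P j := fun j => by
    rw [← conjTranspose_eq_transpose_of_trivial]
    exact (hPpd j).1
  have hRt : Rᵀ = R := by
    rw [← conjTranspose_eq_transpose_of_trivial]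
    exact hR.1
  set M := R + γ • (Bᵀ * P i * B) + γ • (Dᵀ * P i * D) with hMdef
  set K := γ • (Bᵀ * P i * A) + γ • (Dᵀ * P i * C) with hKdef
  set L' := L (i + 1) with hL'def
  have hL' : L' = -(M⁻¹ * K) := hupd i
  have hMpd : M.PosDef := by
    rw [hMdef]
    exact (hR.add_posSemidef (psd_smul hγ0 (psd_tconj B (hPpd i).posSemidef))).add_posSemidef
      (psd_smul hγ0 (psd_tconj D (hPpd i).posSemidef))
  have hMMinv : M * M⁻¹ = 1 :=
    mul_nonsing_inv M ((Matrix.isUnit_iff_isUnit_det M).mp hMpd.isUnit)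
  have hMt : Mᵀ = M := by
    rw [hMdef]
    simp [transpose_add, transpose_smul, transpose_mul, transpose_transpose,
      Matrix.mul_assoc, hPt i, hRt]
  have hMLK : M * L' = -K := by
    rw [hL', Matrix.mul_neg, ← Matrix.mul_assoc, hMMinv, Matrix.one_mul]
  have hLM : L'ᵀ * M = -Kᵀ := by
    have h := congrArg Matrix.transpose hMLK
    rw [transpose_mul, hMt, transpose_neg] at h
    exact h
  set S := (L i - L')ᵀ * M * (L i - L') with hSdef
  have hSpsd : S.PosSemidef := psd_tconj _ hMpd.posSemidef
  have key : (L i)ᵀ * K + Kᵀ * (L i) + (L i)ᵀ * M * (L i)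
      = (L'ᵀ * K + Kᵀ * L' + L'ᵀ * M * L') + S := by
    have hT : L'ᵀ * M * L' = -(Kᵀ * L') := by rw [hLM, Matrix.neg_mul]
    have hT2 : L'ᵀ * K = Kᵀ * L' := by
      have h2 : L'ᵀ * M * L' = -(L'ᵀ * K) := by
        rw [Matrix.mul_assoc, hMLK, Matrix.mul_neg]
      have h3 := hT.symm.trans h2
      exact (neg_inj.mp h3).symm
    have e1 : (L i)ᵀ * M * L' = -((L i)ᵀ * K) := by
      rw [Matrix.mul_assoc, hMLK, Matrix.mul_neg]
    have e2 : L'ᵀ * M * (L i) = -(Kᵀ * (L i)) := by rw [hLM, Matrix.neg_mul]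
    rw [hSdef]
    simp only [transpose_sub, Matrix.sub_mul, Matrix.mul_sub]
    rw [e1, e2, hT, hT2]
    abel
  have e0 := expand_sle A C (P i) B D R γ (hPt i) (L i)
  rw [← hKdef, ← hMdef] at e0
  have e1 := expand_sle A C (P i) B D R γ (hPt i) L'
  rw [← hKdef, ← hMdef] at e1
  have hPi : P i = γ • ((A + B * L')ᵀ * P i * (A + B * L')) +
      γ • ((C + D * L')ᵀ * P i * (C + D * L')) + L'ᵀ * R * L' + Q + S := by
    have h0 := hsle i
    rw [e0, key] at h0
    rw [e1]
    nth_rewrite 1 [h0]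
    abel
  have hP1 : P (i + 1) = γ • ((A + B * L')ᵀ * P (i + 1) * (A + B * L')) +
      γ • ((C + D * L')ᵀ * P (i + 1) * (C + D * L')) + L'ᵀ * R * L' + Q := hsle (i + 1)
  clear e0 e1 key hMLK hLM hMMinv hL'
  set g : Matrix (Fin n) (Fin n) ℝ → Matrix (Fin n) (Fin n) ℝ :=
    fun X => γ • ((A + B * L')ᵀ * X * (A + B * L')) +
      γ • ((C + D * L')ᵀ * X * (C + D * L')) with hgdef
  have hPi' : P i = g (P i) + L'ᵀ * R * L' + Q + S := by
    simpa only [hgdef] using hPi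
  have hP1' : P (i + 1) = g (P (i + 1)) + L'ᵀ * R * L' + Q := by
    simpa only [hgdef] using hP1
  have hgadd : ∀ X Y, g (X + Y) = g X + g Y := by
    intro X Y
    simp only [hgdef, Matrix.mul_add, Matrix.add_mul, smul_add]
    abel
  have hgsub : ∀ X Y, g (X - Y) = g X - g Y := by
    intro X Y
    simp only [hgdef, Matrix.mul_sub, Matrix.sub_mul, smul_sub]
    abel
  have hgsmul : ∀ (c : ℝ) X, g (c • X) = c • g X := by
    intro c X
    simp only [hgdef, Matrix.mul_smul, Matrix.smul_mul, smul_add, smul_smul, mul_comm]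
  have hgpsd : ∀ X : Matrix (Fin n) (Fin n) ℝ, X.PosSemidef → (g X).PosSemidef := by
    intro X hX
    exact (psd_smul hγ0 (psd_tconj _ hX)).add (psd_smul hγ0 (psd_tconj _ hX))
  set Δ := P i - P (i + 1) with hΔdef
  have hΔeq : Δ = g Δ + S := by
    rw [hΔdef, hgsub]
    calc P i - P (i + 1)
        = (g (P i) + L'ᵀ * R * L' + Q + S) - (g (P (i + 1)) + L'ᵀ * R * L' + Q) := by
          rw [← hPi', ← hP1']
      _ = g (P i) - g (P (i + 1)) + S := by abel
  have key2 : ∀ N, (Δ - g^[N] Δ).PosSemidef := by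
    intro N
    induction N with
    | zero => simpa using Matrix.PosSemidef.zero
    | succ N ih =>
        rw [Function.iterate_succ_apply']
        have hstep : Δ - g (g^[N] Δ) = g (Δ - g^[N] Δ) + S := by
          rw [hgsub]
          nth_rewrite 1 [hΔeq]
          abel
        rw [hstep]
        exact (hgpsd _ ih).add hSpsd
  obtain ⟨cP, hcP, hcPle⟩ := quad_lb' (hPpd (i + 1))
  obtain ⟨cQ, hcQ, hcQle⟩ := quad_lb' hQ
  set CP := max (∑ a, ∑ b, |P (i + 1) a b|) 1 with hCPdef
  have hCP0 : (0:ℝ) < CP := lt_of_lt_of_le one_pos (le_max_right _ _)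
  have hCPle : ∀ x : Fin n → ℝ, x ⬝ᵥ (P (i + 1)) *ᵥ x ≤ CP * (x ⬝ᵥ x) := fun x =>
    (quad_ub' _ x).trans (mul_le_mul_of_nonneg_right (le_max_left _ _) (hdot x))
  set ε := min (cQ / CP) 1 with hεdef
  have hε0 : 0 < ε := lt_min (div_pos hcQ hCP0) one_pos
  have hε1 : ε ≤ 1 := min_le_right _ _
  have hεCP : ε * CP ≤ cQ := by
    have h := min_le_left (cQ / CP) 1
    calc ε * CP ≤ (cQ / CP) * CP := mul_le_mul_of_nonneg_right h hCP0.le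
      _ = cQ := by field_simp
  have hQP : (Q - ε • P (i + 1)).PosSemidef := by
    refine posSemidef_iff_dotProduct_mulVec.mpr ⟨hQ.1.sub (herm_smul ε (hPpd (i + 1)).1), fun x => ?_⟩
    have h1 := hcQle x
    have h2 := hCPle x
    have h3 := hdot x
    have h4 : ε * (x ⬝ᵥ (P (i + 1)) *ᵥ x) ≤ ε * (CP * (x ⬝ᵥ x)) :=
      mul_le_mul_of_nonneg_left h2 hε0.le
    have h5 : (ε * CP) * (x ⬝ᵥ x) ≤ cQ * (x ⬝ᵥ x) :=
      mul_le_mul_of_nonneg_right hεCP h3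
    simp only [sub_mulVec, dotProduct_sub, smul_mulVec, dotProduct_smul, smul_eq_mul,
      star_trivial]
    nlinarith
  have hcontr : ∀ N, ((1 - ε) ^ N • P (i + 1) - g^[N] (P (i + 1))).PosSemidef := by
    intro N
    induction N with
    | zero => simpa using Matrix.PosSemidef.zero
    | succ N ih =>
        rw [Function.iterate_succ_apply']
        have heq1 : P (i + 1) - g (P (i + 1)) = L'ᵀ * R * L' + Q := by
          nth_rewrite 1 [hP1']
          abel
        have hstep : (1 - ε) • P (i + 1) - g (P (i + 1)) = (Q - ε • P (i + 1)) + L'ᵀ * R * L' := by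
          calc (1 - ε) • P (i + 1) - g (P (i + 1))
              = (P (i + 1) - g (P (i + 1))) - ε • P (i + 1) := by
                rw [sub_smul, one_smul]; abel
            _ = (L'ᵀ * R * L' + Q) - ε • P (i + 1) := by rw [heq1]
            _ = (Q - ε • P (i + 1)) + L'ᵀ * R * L' := by abel
        have hexp : (1 - ε) ^ (N + 1) • P (i + 1) - g (g^[N] (P (i + 1)))
            = (1 - ε) ^ N • ((1 - ε) • P (i + 1) - g (P (i + 1)))
              + g ((1 - ε) ^ N • P (i + 1) - g^[N] (P (i + 1))) := by
          rw [hgsub, hgsmul, smul_sub, smul_smul,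
            show (1 - ε) ^ N * (1 - ε) = (1 - ε) ^ (N + 1) from (pow_succ _ _).symm]
          abel
        rw [hexp]
        refine (psd_smul (pow_nonneg (by linarith) N) ?_).add (hgpsd _ ih)
        rw [hstep]
        exact hQP.add (psd_tconj L' hR.posSemidef)
  have hitadd : ∀ N (X Y : Matrix (Fin n) (Fin n) ℝ), g^[N] (X + Y) = g^[N] X + g^[N] Y := by
    intro N
    induction N with
    | zero => intro X Y; simp
    | succ N ih =>
        intro X Y
        rw [Function.iterate_succ_apply', Function.iterate_succ_apply',
          Function.iterate_succ_apply', ih, hgadd]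
  have hitsmul : ∀ N (c : ℝ) (X : Matrix (Fin n) (Fin n) ℝ), g^[N] (c • X) = c • g^[N] X := by
    intro N
    induction N with
    | zero => intro c X; simp
    | succ N ih =>
        intro c X
        rw [Function.iterate_succ_apply', Function.iterate_succ_apply', ih, hgsmul]
  have hitpsd : ∀ N (X : Matrix (Fin n) (Fin n) ℝ), X.PosSemidef → (g^[N] X).PosSemidef := by
    intro N
    induction N with
    | zero => intro X hX; simpa using hX
    | succ N ih =>
        intro X hX
        rw [Function.iterate_succ_apply']
        exact hgpsd _ (ih _ hX)
  set Ca := ∑ a, ∑ b, |(-Δ) a b| with hCadef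
  have hΔlb : ∀ x : Fin n → ℝ, -(Ca * (x ⬝ᵥ x)) ≤ x ⬝ᵥ Δ *ᵥ x := by
    intro x
    have h := quad_ub' (-Δ) x
    rw [neg_mulVec, dotProduct_neg] at h
    linarith
  set α := max Ca 0 / cP with hαdef
  have hα0 : 0 ≤ α := div_nonneg (le_max_right _ _) hcP.le
  have hαcP : α * cP = max Ca 0 := div_mul_cancel₀ _ hcP.ne'
  have hαpsd : (Δ + α • P (i + 1)).PosSemidef := by
    refine posSemidef_iff_dotProduct_mulVec.mpr ⟨((hPpd i).1.sub (hPpd (i + 1)).1).add (herm_smul α (hPpd (i + 1)).1), fun x => ?_⟩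
    have h1 : α * (cP * (x ⬝ᵥ x)) ≤ α * (x ⬝ᵥ (P (i + 1)) *ᵥ x) :=
      mul_le_mul_of_nonneg_left (hcPle x) hα0
    have h2 : max Ca 0 * (x ⬝ᵥ x) = α * (cP * (x ⬝ᵥ x)) := by rw [← hαcP]; ring
    have h3 : Ca * (x ⬝ᵥ x) ≤ max Ca 0 * (x ⬝ᵥ x) :=
      mul_le_mul_of_nonneg_right (le_max_left _ _) (hdot x)
    have h4 := hΔlb x
    simp only [add_mulVec, dotProduct_add, smul_mulVec, dotProduct_smul, smul_eq_mul,
      star_trivial]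
    linarith
  have hαpsdN : ∀ N, (g^[N] Δ + α • g^[N] (P (i + 1))).PosSemidef := by
    intro N
    have h := hitpsd N _ hαpsd
    rwa [hitadd, hitsmul] at h
  refine posSemidef_iff_dotProduct_mulVec.mpr ⟨(hPpd i).1.sub (hPpd (i + 1)).1, fun x => ?_⟩
  have hbound : ∀ N : ℕ,
      -(α * ((1 - ε) ^ N * (x ⬝ᵥ (P (i + 1)) *ᵥ x))) ≤ x ⬝ᵥ Δ *ᵥ x := by
    intro N
    have h1 : x ⬝ᵥ (g^[N] Δ) *ᵥ x ≤ x ⬝ᵥ Δ *ᵥ x := by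
      have h := (key2 N).dotProduct_mulVec_nonneg x
      simp only [sub_mulVec, dotProduct_sub, star_trivial] at h
      linarith
    have h2 : -(α * (x ⬝ᵥ (g^[N] (P (i + 1))) *ᵥ x)) ≤ x ⬝ᵥ (g^[N] Δ) *ᵥ x := by
      have h := (hαpsdN N).dotProduct_mulVec_nonneg x
      simp only [add_mulVec, dotProduct_add, smul_mulVec, dotProduct_smul, smul_eq_mul,
        star_trivial] at h
      linarith
    have h3 : x ⬝ᵥ (g^[N] (P (i + 1))) *ᵥ x ≤ (1 - ε) ^ N * (x ⬝ᵥ (P (i + 1)) *ᵥ x) := by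
      have h := (hcontr N).dotProduct_mulVec_nonneg x
      simp only [sub_mulVec, dotProduct_sub, smul_mulVec, dotProduct_smul, smul_eq_mul,
        star_trivial] at h
      linarith
    have h4 : α * (x ⬝ᵥ (g^[N] (P (i + 1))) *ᵥ x)
        ≤ α * ((1 - ε) ^ N * (x ⬝ᵥ (P (i + 1)) *ᵥ x)) :=
      mul_le_mul_of_nonneg_left h3 hα0
    linarith
  have hlim : Filter.Tendsto
      (fun N : ℕ => -(α * ((1 - ε) ^ N * (x ⬝ᵥ (P (i + 1)) *ᵥ x))))
      Filter.atTop (nhds 0) := by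
    have h0 : Filter.Tendsto (fun N : ℕ => (1 - ε) ^ N) Filter.atTop (nhds 0) :=
      tendsto_pow_atTop_nhds_zero_of_lt_one (by linarith) (by linarith)
    have h1 := h0.const_mul (-(α * (x ⬝ᵥ (P (i + 1)) *ᵥ x)))
    rw [mul_zero] at h1
    exact h1.congr fun N => by ring
  have hfin : (0:ℝ) ≤ x ⬝ᵥ Δ *ᵥ x := le_of_tendsto' hlim hbound
  simpa using hfin
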